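/- The orthogonal projection onto the tangent space is well defined: if (x1, x2, x3) ∈ M with d > 0, then for every triple Z ∈ (ℝ³)³ there exist unique reals α, β such that S·(α, β)ᵀ = (⟨Z, N1⟩, ⟨Z, N2⟩)ᵀ, and for these α, β the triple Z − X·U_α^β satisfies the tangent equations E1(Z − X·U_α^β) = 0 and E2(Z − X·U_α^β) = 0. -/

import Mathlib

open RealInnerProductSpace

/-- The triple `X·U_α^β = (η1, η2, η3)` from the paper. -/
noncomputable def XU (x1 x2 x3 : EuclideanSpace ℝ (Fin 3)) (α β : ℝ) :
    EuclideanSpace ℝ (Fin 3) × EuclideanSpace ℝ (Fin 3) × EuclideanSpace ℝ (Fin 3) :=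
  ((α + β) • (x2 - x3),
   (α + β) • x1 - (2 * α) • x2 + (α - β) • x3,
   -((α + β) • x1) + (α - β) • x2 + (2 * β) • x3)

/-- The inner product of two triples of vectors in `ℝ³`. -/
noncomputable def tripleInner
    (ξ η : EuclideanSpace ℝ (Fin 3) × EuclideanSpace ℝ (Fin 3) ×
      EuclideanSpace ℝ (Fin 3)) : ℝ :=
  ⟪ξ.1, η.1⟫ + ⟪ξ.2.1, η.2.1⟫ + ⟪ξ.2.2, η.2.2⟫

/-- The tangent equation `E1(ξ) = 0` left-hand side. -/
noncomputable def E1 (x1 x2 x3 : EuclideanSpace ℝ (Fin 3))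
    (ξ : EuclideanSpace ℝ (Fin 3) × EuclideanSpace ℝ (Fin 3) ×
      EuclideanSpace ℝ (Fin 3)) : ℝ :=
  ⟪ξ.1 - ξ.2.1, x2 - x3⟫ + ⟪x1 - x2, ξ.2.1 - ξ.2.2⟫

/-- The tangent equation `E2(ξ) = 0` left-hand side. -/
noncomputable def E2 (x1 x2 x3 : EuclideanSpace ℝ (Fin 3))
    (ξ : EuclideanSpace ℝ (Fin 3) × EuclideanSpace ℝ (Fin 3) ×
      EuclideanSpace ℝ (Fin 3)) : ℝ :=
  ⟪ξ.1 - ξ.2.2, x2 - x3⟫ + ⟪x1 - x3, ξ.2.1 - ξ.2.2⟫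


/-- A 2×2 symmetric linear system with nonzero determinant has a unique solution. -/
lemma solve2 (a b c e f : ℝ) (hdet : a * c - b * b ≠ 0) :
    ∃! p : ℝ × ℝ, a * p.1 + b * p.2 = e ∧ b * p.1 + c * p.2 = f := by
  have hdet' : a * c - b ^ 2 ≠ 0 := by rwa [sq]
  have hdet'' : -b ^ 2 + c * a ≠ 0 := by rwa [sq, neg_add_eq_sub, mul_comm c]
  have hdet''' : c * a - b ^ 2 ≠ 0 := by rwa [sq, mul_comm c]
  refine ⟨((c * e - b * f) / (a * c - b * b), (a * f - b * e) / (a * c - b * b)), ⟨?_, ?_⟩, ?_⟩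
  · field_simp; ring
  · field_simp; ring
  · rintro ⟨q1, q2⟩ ⟨hq1, hq2⟩
    have h1 : q1 = (c * e - b * f) / (a * c - b * b) := by
      field_simp
      linear_combination c * hq1 - b * hq2
    have h2 : q2 = (a * f - b * e) / (a * c - b * b) := by
      field_simp
      linear_combination a * hq2 - b * hq1
    simp [h1, h2]

lemma tripleInner_sub_XU (x1 x2 x3 : EuclideanSpace ℝ (Fin 3)) (α β : ℝ)
    (Z W : EuclideanSpace ℝ (Fin 3) × EuclideanSpace ℝ (Fin 3) × EuclideanSpace ℝ (Fin 3)) :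
    tripleInner (Z - XU x1 x2 x3 α β) W =
      tripleInner Z W - α * tripleInner (XU x1 x2 x3 1 0) W
        - β * tripleInner (XU x1 x2 x3 0 1) W := by
  simp only [tripleInner, XU, Prod.fst_sub, Prod.snd_sub, inner_sub_left, inner_add_left,
    inner_smul_left, inner_neg_left, inner_sub_right, conj_trivial]
  ring

lemma E1_eq_inner (x1 x2 x3 : EuclideanSpace ℝ (Fin 3))
    (ξ : EuclideanSpace ℝ (Fin 3) × EuclideanSpace ℝ (Fin 3) × EuclideanSpace ℝ (Fin 3)) :
    E1 x1 x2 x3 ξ = tripleInner ξ (XU x1 x2 x3 1 0) := by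
  have c1 : ⟪x1 - x2, ξ.2.1 - ξ.2.2⟫ = ⟪ξ.2.1 - ξ.2.2, x1 - x2⟫ := real_inner_comm _ _
  simp only [E1, tripleInner, XU, c1]
  simp only [inner_sub_left, inner_sub_right, inner_add_right, inner_smul_right,
    inner_neg_right, conj_trivial]
  ring

lemma E2_eq_inner (x1 x2 x3 : EuclideanSpace ℝ (Fin 3))
    (ξ : EuclideanSpace ℝ (Fin 3) × EuclideanSpace ℝ (Fin 3) × EuclideanSpace ℝ (Fin 3)) :
    E2 x1 x2 x3 ξ = tripleInner ξ (XU x1 x2 x3 0 1) := by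
  have c1 : ⟪x1 - x3, ξ.2.1 - ξ.2.2⟫ = ⟪ξ.2.1 - ξ.2.2, x1 - x3⟫ := real_inner_comm _ _
  simp only [E2, tripleInner, XU, c1]
  simp only [inner_sub_left, inner_sub_right, inner_add_right, inner_smul_right,
    inner_neg_right, conj_trivial]
  ring

lemma gram_entries (d : ℝ) (x1 x2 x3 : EuclideanSpace ℝ (Fin 3))
    (h1 : ⟪x1 - x2, x2 - x3⟫ = -d ^ 2 / 2)
    (h2 : ⟪x1 - x3, x2 - x3⟫ = d ^ 2 / 2) :
    tripleInner (XU x1 x2 x3 1 0) (XU x1 x2 x3 1 0) = 2 * ⟪x1 - x2, x1 - x2⟫ + 3 * d ^ 2 ∧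
    tripleInner (XU x1 x2 x3 1 0) (XU x1 x2 x3 0 1) = 2 * ⟪x1 - x2, x1 - x2⟫ - d ^ 2 ∧
    tripleInner (XU x1 x2 x3 0 1) (XU x1 x2 x3 1 0) = 2 * ⟪x1 - x2, x1 - x2⟫ - d ^ 2 ∧
    tripleInner (XU x1 x2 x3 0 1) (XU x1 x2 x3 0 1) = 2 * ⟪x1 - x2, x1 - x2⟫ + 3 * d ^ 2 := by
  have c12 : ⟪x1, x2⟫ = ⟪x2, x1⟫ := real_inner_comm _ _
  have c13 : ⟪x1, x3⟫ = ⟪x3, x1⟫ := real_inner_comm _ _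
  have c23 : ⟪x2, x3⟫ = ⟪x3, x2⟫ := real_inner_comm _ _
  simp only [tripleInner, XU, inner_sub_left, inner_sub_right, inner_add_left, inner_add_right,
    inner_smul_left, inner_smul_right, inner_neg_left, inner_neg_right, conj_trivial] at *
  refine ⟨by linarith, by linarith, by linarith, by linarith⟩

/-- The orthogonal projection onto the tangent space is well defined:
if `(x1, x2, x3) ∈ M` with `d > 0`, then for every triple `Z` there exist unique reals
`α, β` solving `S·(α, β)ᵀ = (⟨Z, N1⟩, ⟨Z, N2⟩)ᵀ`, and for these `α, β` the triple
`Z − X·U_α^β` satisfies the tangent equations. -/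
theorem orthogonal_projection_well_defined (d : ℝ) (hd : 0 < d)
    (x1 x2 x3 : EuclideanSpace ℝ (Fin 3))
    (h1 : ⟪x1 - x2, x2 - x3⟫ = -d ^ 2 / 2)
    (h2 : ⟪x1 - x3, x2 - x3⟫ = d ^ 2 / 2)
    (Z : EuclideanSpace ℝ (Fin 3) × EuclideanSpace ℝ (Fin 3) ×
      EuclideanSpace ℝ (Fin 3)) :
    (∃! p : ℝ × ℝ,
      tripleInner (XU x1 x2 x3 1 0) (XU x1 x2 x3 1 0) * p.1 +
        tripleInner (XU x1 x2 x3 0 1) (XU x1 x2 x3 1 0) * p.2 =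
        tripleInner Z (XU x1 x2 x3 1 0) ∧
      tripleInner (XU x1 x2 x3 1 0) (XU x1 x2 x3 0 1) * p.1 +
        tripleInner (XU x1 x2 x3 0 1) (XU x1 x2 x3 0 1) * p.2 =
        tripleInner Z (XU x1 x2 x3 0 1)) ∧
    (∀ p : ℝ × ℝ,
      (tripleInner (XU x1 x2 x3 1 0) (XU x1 x2 x3 1 0) * p.1 +
        tripleInner (XU x1 x2 x3 0 1) (XU x1 x2 x3 1 0) * p.2 =
        tripleInner Z (XU x1 x2 x3 1 0) ∧
      tripleInner (XU x1 x2 x3 1 0) (XU x1 x2 x3 0 1) * p.1 +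
        tripleInner (XU x1 x2 x3 0 1) (XU x1 x2 x3 0 1) * p.2 =
        tripleInner Z (XU x1 x2 x3 0 1)) →
      E1 x1 x2 x3 (Z - XU x1 x2 x3 p.1 p.2) = 0 ∧
      E2 x1 x2 x3 (Z - XU x1 x2 x3 p.1 p.2) = 0) := by
  obtain ⟨hs11, hs12, hs21, hs22⟩ := gram_entries d x1 x2 x3 h1 h2
  set U : ℝ := ⟪x1 - x2, x1 - x2⟫ with hUdef
  have hU : 0 ≤ U := real_inner_self_nonneg
  have hdet : (2 * U + 3 * d ^ 2) * (2 * U + 3 * d ^ 2)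
      - (2 * U - d ^ 2) * (2 * U - d ^ 2) ≠ 0 := by
    nlinarith [sq_nonneg d, mul_pos hd hd]
  constructor
  · rw [hs11, hs12, hs21, hs22]
    exact solve2 _ _ _ _ _ hdet
  · rintro p ⟨hp1, hp2⟩
    constructor
    · rw [E1_eq_inner, tripleInner_sub_XU]
      linarith [hp1]
    · rw [E2_eq_inner, tripleInner_sub_XU]
      linarith [hp2]
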